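/- Let H(q,p) = ½Σ_{i=1}^4 p_i² + Σ_{i=1}^3 e^{q_i − q_{i+1}} + e^{q_3 + q_4} + e^{−q_1} + e^{−2q_1} on ℝ^8. If (q(t), p(t)) solves Hamilton's equations q̇_i = ∂H/∂p_i, ṗ_i = −∂H/∂q_i, then the functions a_i = ½e^{(q_i − q_{i+1})/2} (i = 1,2,3), a_4 = ½e^{(q_3 + q_4)/2}, a_5 = (1/√2)e^{−q_1/2}, b_i = −½p_i (i = 1, …, 4) satisfy the system: ȧ_i = a_i(b_{i+1} − b_i) for i = 1,2,3; ȧ_4 = −a_4(b_3 + b_4); ȧ_5 = a_5 b_1; ḃ_1 = 2a_1² − a_5² − 4a_5⁴; ḃ_2 = 2(a_2² − a_1²); ḃ_4 = 2(a_4² − a_3²); ḃ_3 = 2(a_4² + a_3² − a_2²). -/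

import Mathlib

/-- The Kozlov–Treshchev Hamiltonian for `n = 4`:
`H(q,p) = ½Σ_{i=1}^4 p_i² + Σ_{i=1}^3 e^{q_i − q_{i+1}} + e^{q_3+q_4} + e^{−q_1} + e^{−2q_1}`
(coordinates indexed `1, …, 4`). -/
noncomputable def KT4Ham : (ℕ → ℝ) → (ℕ → ℝ) → ℝ := fun q p =>
  (1 / 2) * ∑ i ∈ Finset.Icc 1 4, (p i) ^ 2
    + ∑ i ∈ Finset.Icc 1 3, Real.exp (q i - q (i + 1))
    + Real.exp (q 3 + q 4) + Real.exp (-q 1) + Real.exp (-2 * q 1)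

private lemma halfsq (c x : ℝ) : HasDerivAt (fun y : ℝ => (1/2)*y^2 + c) x x := by
  have h := ((hasDerivAt_pow 2 x).const_mul (1/2:ℝ)).add_const c
  refine h.congr_deriv ?_
  ring

private lemma exp_sq (x : ℝ) : Real.exp x ^ 2 = Real.exp (2*x) := by
  rw [sq, ← Real.exp_add]; ring_nf

private lemma exp_pow4 (x : ℝ) : Real.exp x ^ 4 = Real.exp (4*x) := by
  rw [show (4:ℕ) = 2*2 from rfl, pow_mul, exp_sq, exp_sq]; ring_nf

private lemma inv_sqrt2_sq : (1/Real.sqrt 2 : ℝ)^2 = 1/2 := by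
  rw [div_pow, Real.sq_sqrt (by norm_num : (0:ℝ) ≤ 2)]; norm_num

private lemma inv_sqrt2_pow4 : (1/Real.sqrt 2 : ℝ)^4 = 1/4 := by
  rw [show (4:ℕ) = 2*2 from rfl, pow_mul, inv_sqrt2_sq]; norm_num

private lemma KT4_q_deriv (q p : ℕ → ℝ) (j : ℕ) (hj : j ∈ Finset.Icc 1 4) :
    deriv (fun x => KT4Ham q (Function.update p j x)) (p j) = p j := by
  have hI4 : Finset.Icc 1 4 = ({1,2,3,4} : Finset ℕ) := by decide
  have hI3 : Finset.Icc 1 3 = ({1,2,3} : Finset ℕ) := by decide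
  rw [Finset.mem_Icc] at hj
  obtain ⟨hj1, hj2⟩ := hj
  interval_cases j
  · have hF : (fun x => KT4Ham q (Function.update p 1 x)) =
        (fun x => (1/2)*x^2 + ((1/2)*((p 2)^2 + (p 3)^2 + (p 4)^2)
          + Real.exp (q 1 - q 2) + Real.exp (q 2 - q 3) + Real.exp (q 3 - q 4)
          + Real.exp (q 3 + q 4) + Real.exp (-q 1) + Real.exp (-2 * q 1))) := by
      funext x; simp [KT4Ham, hI4, hI3, Function.update_apply]; ring
    rw [hF, (halfsq _ (p 1)).deriv]
  · have hF : (fun x => KT4Ham q (Function.update p 2 x)) =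
        (fun x => (1/2)*x^2 + ((1/2)*((p 1)^2 + (p 3)^2 + (p 4)^2)
          + Real.exp (q 1 - q 2) + Real.exp (q 2 - q 3) + Real.exp (q 3 - q 4)
          + Real.exp (q 3 + q 4) + Real.exp (-q 1) + Real.exp (-2 * q 1))) := by
      funext x; simp [KT4Ham, hI4, hI3, Function.update_apply]; ring
    rw [hF, (halfsq _ (p 2)).deriv]
  · have hF : (fun x => KT4Ham q (Function.update p 3 x)) =
        (fun x => (1/2)*x^2 + ((1/2)*((p 1)^2 + (p 2)^2 + (p 4)^2)
          + Real.exp (q 1 - q 2) + Real.exp (q 2 - q 3) + Real.exp (q 3 - q 4)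
          + Real.exp (q 3 + q 4) + Real.exp (-q 1) + Real.exp (-2 * q 1))) := by
      funext x; simp [KT4Ham, hI4, hI3, Function.update_apply]; ring
    rw [hF, (halfsq _ (p 3)).deriv]
  · have hF : (fun x => KT4Ham q (Function.update p 4 x)) =
        (fun x => (1/2)*x^2 + ((1/2)*((p 1)^2 + (p 2)^2 + (p 3)^2)
          + Real.exp (q 1 - q 2) + Real.exp (q 2 - q 3) + Real.exp (q 3 - q 4)
          + Real.exp (q 3 + q 4) + Real.exp (-q 1) + Real.exp (-2 * q 1))) := by
      funext x; simp [KT4Ham, hI4, hI3, Function.update_apply]; ring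
    rw [hF, (halfsq _ (p 4)).deriv]

private lemma KT4_p1_deriv (q p : ℕ → ℝ) :
    -(Real.exp (q 1 - q 2)) + Real.exp (-q 1) + 2 * Real.exp (-2 * q 1)
      = -(deriv (fun x => KT4Ham (Function.update q 1 x) p) (q 1)) := by
  have hF : (fun x => KT4Ham (Function.update q 1 x) p) =
      (fun x => Real.exp (x - q 2) + Real.exp (-x) + Real.exp (-2 * x)
        + ((1/2)*((p 1)^2 + (p 2)^2 + (p 3)^2 + (p 4)^2)
        + Real.exp (q 2 - q 3) + Real.exp (q 3 - q 4) + Real.exp (q 3 + q 4))) := by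
    funext x
    simp [KT4Ham, (by decide : Finset.Icc 1 4 = ({1,2,3,4} : Finset ℕ)),
      (by decide : Finset.Icc 1 3 = ({1,2,3} : Finset ℕ)), Function.update_apply]
    ring
  have hD : HasDerivAt (fun x => Real.exp (x - q 2) + Real.exp (-x) + Real.exp (-2 * x)
        + ((1/2)*((p 1)^2 + (p 2)^2 + (p 3)^2 + (p 4)^2)
        + Real.exp (q 2 - q 3) + Real.exp (q 3 - q 4) + Real.exp (q 3 + q 4)))
      (Real.exp (q 1 - q 2) * 1 + Real.exp (-q 1) * (-1)
        + Real.exp (-2 * q 1) * (-2 * 1)) (q 1) :=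
    ((((hasDerivAt_id (q 1)).sub_const (q 2)).exp.add
      (((hasDerivAt_id (q 1)).neg).exp)).add
      (((hasDerivAt_id (q 1)).const_mul (-2:ℝ)).exp)).add_const _
  rw [hF, hD.deriv]; ring

private lemma KT4_p2_deriv (q p : ℕ → ℝ) :
    Real.exp (q 1 - q 2) - Real.exp (q 2 - q 3)
      = -(deriv (fun x => KT4Ham (Function.update q 2 x) p) (q 2)) := by
  have hF : (fun x => KT4Ham (Function.update q 2 x) p) =
      (fun x => Real.exp (q 1 - x) + Real.exp (x - q 3)
        + ((1/2)*((p 1)^2 + (p 2)^2 + (p 3)^2 + (p 4)^2)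
        + Real.exp (q 3 - q 4) + Real.exp (q 3 + q 4)
        + Real.exp (-q 1) + Real.exp (-2 * q 1))) := by
    funext x
    simp [KT4Ham, (by decide : Finset.Icc 1 4 = ({1,2,3,4} : Finset ℕ)),
      (by decide : Finset.Icc 1 3 = ({1,2,3} : Finset ℕ)), Function.update_apply]
    ring
  have hD : HasDerivAt (fun x => Real.exp (q 1 - x) + Real.exp (x - q 3)
        + ((1/2)*((p 1)^2 + (p 2)^2 + (p 3)^2 + (p 4)^2)
        + Real.exp (q 3 - q 4) + Real.exp (q 3 + q 4)
        + Real.exp (-q 1) + Real.exp (-2 * q 1)))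
      (Real.exp (q 1 - q 2) * (-1) + Real.exp (q 2 - q 3) * 1) (q 2) :=
    ((((hasDerivAt_id (q 2)).const_sub (q 1)).exp.add
      (((hasDerivAt_id (q 2)).sub_const (q 3)).exp)).add_const _)
  rw [hF, hD.deriv]; ring

private lemma KT4_p3_deriv (q p : ℕ → ℝ) :
    Real.exp (q 2 - q 3) - Real.exp (q 3 - q 4) - Real.exp (q 3 + q 4)
      = -(deriv (fun x => KT4Ham (Function.update q 3 x) p) (q 3)) := by
  have hF : (fun x => KT4Ham (Function.update q 3 x) p) =
      (fun x => Real.exp (q 2 - x) + Real.exp (x - q 4) + Real.exp (x + q 4)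
        + ((1/2)*((p 1)^2 + (p 2)^2 + (p 3)^2 + (p 4)^2)
        + Real.exp (q 1 - q 2) + Real.exp (-q 1) + Real.exp (-2 * q 1))) := by
    funext x
    simp [KT4Ham, (by decide : Finset.Icc 1 4 = ({1,2,3,4} : Finset ℕ)),
      (by decide : Finset.Icc 1 3 = ({1,2,3} : Finset ℕ)), Function.update_apply]
    ring
  have hD : HasDerivAt (fun x => Real.exp (q 2 - x) + Real.exp (x - q 4) + Real.exp (x + q 4)
        + ((1/2)*((p 1)^2 + (p 2)^2 + (p 3)^2 + (p 4)^2)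
        + Real.exp (q 1 - q 2) + Real.exp (-q 1) + Real.exp (-2 * q 1)))
      (Real.exp (q 2 - q 3) * (-1) + Real.exp (q 3 - q 4) * 1
        + Real.exp (q 3 + q 4) * 1) (q 3) :=
    (((((hasDerivAt_id (q 3)).const_sub (q 2)).exp.add
      (((hasDerivAt_id (q 3)).sub_const (q 4)).exp)).add
      (((hasDerivAt_id (q 3)).add_const (q 4)).exp)).add_const _)
  rw [hF, hD.deriv]; ring

private lemma KT4_p4_deriv (q p : ℕ → ℝ) :
    Real.exp (q 3 - q 4) - Real.exp (q 3 + q 4)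
      = -(deriv (fun x => KT4Ham (Function.update q 4 x) p) (q 4)) := by
  have hF : (fun x => KT4Ham (Function.update q 4 x) p) =
      (fun x => Real.exp (q 3 - x) + Real.exp (q 3 + x)
        + ((1/2)*((p 1)^2 + (p 2)^2 + (p 3)^2 + (p 4)^2)
        + Real.exp (q 1 - q 2) + Real.exp (q 2 - q 3)
        + Real.exp (-q 1) + Real.exp (-2 * q 1))) := by
    funext x
    simp [KT4Ham, (by decide : Finset.Icc 1 4 = ({1,2,3,4} : Finset ℕ)),
      (by decide : Finset.Icc 1 3 = ({1,2,3} : Finset ℕ)), Function.update_apply]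
    ring
  have hD : HasDerivAt (fun x => Real.exp (q 3 - x) + Real.exp (q 3 + x)
        + ((1/2)*((p 1)^2 + (p 2)^2 + (p 3)^2 + (p 4)^2)
        + Real.exp (q 1 - q 2) + Real.exp (q 2 - q 3)
        + Real.exp (-q 1) + Real.exp (-2 * q 1)))
      (Real.exp (q 3 - q 4) * (-1) + Real.exp (q 3 + q 4) * 1) (q 4) :=
    ((((hasDerivAt_id (q 4)).const_sub (q 3)).exp.add
      (((hasDerivAt_id (q 4)).const_add (q 3)).exp)).add_const _)
  rw [hF, hD.deriv]; ring

/-- If `(q(t), p(t))` solves Hamilton's equations for the `n = 4`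
Kozlov–Treshchev Hamiltonian, then the Flaschka-type variables
`a_i = ½e^{(q_i − q_{i+1})/2}` (`i = 1,2,3`), `a_4 = ½e^{(q_3 + q_4)/2}`,
`a_5 = (1/√2)e^{−q_1/2}`, `b_i = −½p_i` satisfy the Kozlov–Treshchev system in
Flaschka variables. -/
theorem KT4_flaschka
    (q p : ℝ → ℕ → ℝ)
    (hq : ∀ (t : ℝ), ∀ j ∈ Finset.Icc 1 4, HasDerivAt (fun s => q s j)
      (deriv (fun x => KT4Ham (q t) (Function.update (p t) j x)) (p t j)) t)
    (hp : ∀ (t : ℝ), ∀ j ∈ Finset.Icc 1 4, HasDerivAt (fun s => p s j)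
      (-(deriv (fun x => KT4Ham (Function.update (q t) j x) (p t)) (q t j))) t)
    (a b : ℝ → ℕ → ℝ)
    (ha : ∀ (t : ℝ), ∀ i ∈ Finset.Icc 1 3,
      a t i = (1 / 2) * Real.exp ((q t i - q t (i + 1)) / 2))
    (ha4 : ∀ t : ℝ, a t 4 = (1 / 2) * Real.exp ((q t 3 + q t 4) / 2))
    (ha5 : ∀ t : ℝ, a t 5 = (1 / Real.sqrt 2) * Real.exp (-(q t 1) / 2))
    (hb : ∀ (t : ℝ), ∀ i ∈ Finset.Icc 1 4, b t i = -(1 / 2) * p t i) :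
    (∀ (t : ℝ), ∀ i ∈ Finset.Icc 1 3,
      HasDerivAt (fun s => a s i) (a t i * (b t (i + 1) - b t i)) t) ∧
    (∀ t : ℝ, HasDerivAt (fun s => a s 4) (-(a t 4 * (b t 3 + b t 4))) t) ∧
    (∀ t : ℝ, HasDerivAt (fun s => a s 5) (a t 5 * b t 1) t) ∧
    (∀ t : ℝ, HasDerivAt (fun s => b s 1)
      (2 * (a t 1) ^ 2 - (a t 5) ^ 2 - 4 * (a t 5) ^ 4) t) ∧
    (∀ t : ℝ, HasDerivAt (fun s => b s 2) (2 * ((a t 2) ^ 2 - (a t 1) ^ 2)) t) ∧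
    (∀ t : ℝ, HasDerivAt (fun s => b s 4) (2 * ((a t 4) ^ 2 - (a t 3) ^ 2)) t) ∧
    (∀ t : ℝ, HasDerivAt (fun s => b s 3)
      (2 * ((a t 4) ^ 2 + (a t 3) ^ 2 - (a t 2) ^ 2)) t) := by
  have HQ : ∀ t : ℝ, ∀ j ∈ Finset.Icc 1 4, HasDerivAt (fun s => q s j) (p t j) t := by
    intro t j hj
    have h := hq t j hj
    rwa [KT4_q_deriv (q t) (p t) j hj] at h
  have HP1 : ∀ t : ℝ, HasDerivAt (fun s => p s 1)
      (-(Real.exp (q t 1 - q t 2)) + Real.exp (-q t 1) + 2 * Real.exp (-2 * q t 1)) t := by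
    intro t
    have h := hp t 1 (by decide)
    rwa [← KT4_p1_deriv (q t) (p t)] at h
  have HP2 : ∀ t : ℝ, HasDerivAt (fun s => p s 2)
      (Real.exp (q t 1 - q t 2) - Real.exp (q t 2 - q t 3)) t := by
    intro t
    have h := hp t 2 (by decide)
    rwa [← KT4_p2_deriv (q t) (p t)] at h
  have HP3 : ∀ t : ℝ, HasDerivAt (fun s => p s 3)
      (Real.exp (q t 2 - q t 3) - Real.exp (q t 3 - q t 4) - Real.exp (q t 3 + q t 4)) t := by
    intro t
    have h := hp t 3 (by decide)
    rwa [← KT4_p3_deriv (q t) (p t)] at h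
  have HP4 : ∀ t : ℝ, HasDerivAt (fun s => p s 4)
      (Real.exp (q t 3 - q t 4) - Real.exp (q t 3 + q t 4)) t := by
    intro t
    have h := hp t 4 (by decide)
    rwa [← KT4_p4_deriv (q t) (p t)] at h
  refine ⟨?_, ?_, ?_, ?_, ?_, ?_, ?_⟩
  · -- a_i equations, i = 1,2,3
    intro t i hi
    have hi' := hi
    rw [Finset.mem_Icc] at hi'
    obtain ⟨hi1, hi2⟩ := hi'
    interval_cases i
    · have hfa : (fun s => a s 1) = fun s => (1/2) * Real.exp ((q s 1 - q s 2)/2) :=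
        funext fun s => ha s 1 (by decide)
      rw [hfa, ha t 1 (by decide), hb t 1 (by decide), hb t 2 (by decide)]
      have h := ((((HQ t 1 (by decide)).sub (HQ t 2 (by decide))).div_const 2).exp).const_mul
        ((1:ℝ)/2)
      refine h.congr_deriv ?_
      simp only [Pi.sub_apply, Pi.add_apply, Pi.neg_apply]
      ring
    · have hfa : (fun s => a s 2) = fun s => (1/2) * Real.exp ((q s 2 - q s 3)/2) :=
        funext fun s => ha s 2 (by decide)
      rw [hfa, ha t 2 (by decide), hb t 2 (by decide), hb t 3 (by decide)]
      have h := ((((HQ t 2 (by decide)).sub (HQ t 3 (by decide))).div_const 2).exp).const_mul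
        ((1:ℝ)/2)
      refine h.congr_deriv ?_
      simp only [Pi.sub_apply, Pi.add_apply, Pi.neg_apply]
      ring
    · have hfa : (fun s => a s 3) = fun s => (1/2) * Real.exp ((q s 3 - q s 4)/2) :=
        funext fun s => ha s 3 (by decide)
      rw [hfa, ha t 3 (by decide), hb t 3 (by decide), hb t 4 (by decide)]
      have h := ((((HQ t 3 (by decide)).sub (HQ t 4 (by decide))).div_const 2).exp).const_mul
        ((1:ℝ)/2)
      refine h.congr_deriv ?_
      simp only [Pi.sub_apply, Pi.add_apply, Pi.neg_apply]
      ring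
  · -- a_4
    intro t
    have hfa : (fun s => a s 4) = fun s => (1/2) * Real.exp ((q s 3 + q s 4)/2) :=
      funext fun s => ha4 s
    rw [hfa, ha4 t, hb t 3 (by decide), hb t 4 (by decide)]
    have h := ((((HQ t 3 (by decide)).add (HQ t 4 (by decide))).div_const 2).exp).const_mul
      ((1:ℝ)/2)
    refine h.congr_deriv ?_
    simp only [Pi.sub_apply, Pi.add_apply, Pi.neg_apply]
    ring
  · -- a_5
    intro t
    have hfa : (fun s => a s 5) = fun s => (1/Real.sqrt 2) * Real.exp (-(q s 1)/2) :=
      funext fun s => ha5 s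
    rw [hfa, ha5 t, hb t 1 (by decide)]
    have h := ((((HQ t 1 (by decide)).neg).div_const 2).exp).const_mul (1/Real.sqrt 2)
    refine h.congr_deriv ?_
    simp only [Pi.sub_apply, Pi.add_apply, Pi.neg_apply]
    ring
  · -- b_1
    intro t
    have hfb : (fun s => b s 1) = fun s => -(1/2) * p s 1 :=
      funext fun s => hb s 1 (by decide)
    rw [hfb, ha t 1 (by decide), ha5 t]
    have h := (HP1 t).const_mul (-(1/2) : ℝ)
    refine h.congr_deriv ?_
    rw [mul_pow, mul_pow, mul_pow, exp_sq, exp_sq, exp_pow4, inv_sqrt2_sq, inv_sqrt2_pow4,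
      show 2*((q t 1 - q t 2)/2) = q t 1 - q t 2 by ring,
      show 2*(-(q t 1)/2) = -q t 1 by ring,
      show 4*(-(q t 1)/2) = -2 * q t 1 by ring]
    ring
  · -- b_2
    intro t
    have hfb : (fun s => b s 2) = fun s => -(1/2) * p s 2 :=
      funext fun s => hb s 2 (by decide)
    rw [hfb, ha t 1 (by decide), ha t 2 (by decide)]
    have h := (HP2 t).const_mul (-(1/2) : ℝ)
    refine h.congr_deriv ?_
    rw [mul_pow, mul_pow, exp_sq, exp_sq,
      show 2*((q t 1 - q t 2)/2) = q t 1 - q t 2 by ring,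
      show 2*((q t 2 - q t 3)/2) = q t 2 - q t 3 by ring]
    ring
  · -- b_4
    intro t
    have hfb : (fun s => b s 4) = fun s => -(1/2) * p s 4 :=
      funext fun s => hb s 4 (by decide)
    rw [hfb, ha t 3 (by decide), ha4 t]
    have h := (HP4 t).const_mul (-(1/2) : ℝ)
    refine h.congr_deriv ?_
    rw [mul_pow, mul_pow, exp_sq, exp_sq,
      show 2*((q t 3 - q t 4)/2) = q t 3 - q t 4 by ring,
      show 2*((q t 3 + q t 4)/2) = q t 3 + q t 4 by ring]
    ring
  · -- b_3
    intro t
    have hfb : (fun s => b s 3) = fun s => -(1/2) * p s 3 :=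
      funext fun s => hb s 3 (by decide)
    rw [hfb, ha t 2 (by decide), ha t 3 (by decide), ha4 t]
    have h := (HP3 t).const_mul (-(1/2) : ℝ)
    refine h.congr_deriv ?_
    rw [mul_pow, mul_pow, mul_pow, exp_sq, exp_sq, exp_sq,
      show 2*((q t 2 - q t 3)/2) = q t 2 - q t 3 by ring,
      show 2*((q t 3 - q t 4)/2) = q t 3 - q t 4 by ring,
      show 2*((q t 3 + q t 4)/2) = q t 3 + q t 4 by ring]
    ring
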